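/- Let T ⊂ 𝕋^d be a finite sampling set such that the Fourier matrix F(T, M(I)) = (e^{2πih·t})_{t∈T, h∈M(I)} has trivial kernel (i.e., T is a spatial discretization of the span of trigonometric monomials indexed by M(I)). Then the cosine transformed set X = {cos(2πt) : t ∈ T} is a spatial discretization of the span of Chebyshev polynomials indexed by I, i.e., the Chebyshev matrix C(X,I) = (T_k(x))_{x∈X,k∈I} has full column rank |I|. -/

import Mathlib

open Real Complex

/-- The normalized `d`-variate Chebyshev polynomial. -/
noncomputable def chebT {d : ℕ} (k : Fin d → ℕ) (x : Fin d → ℝ) : ℝ :=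
  ∏ j, if k j = 0 then 1 else Real.sqrt 2 * Real.cos (k j * Real.arccos (x j))

/-- The mirror set `M({k})` of a single multi-index. -/
def mirror {d : ℕ} (k : Fin d → ℕ) : Finset (Fin d → ℤ) :=
  Finset.image (fun l : Fin d → Bool => fun j => if l j then (k j : ℤ) else -(k j : ℤ))
    Finset.univ

/-- The mirrored index set `M(I) = ⋃_{k ∈ I} M({k})`. -/
def mirrorSet {d : ℕ} (I : Finset (Fin d → ℕ)) : Finset (Fin d → ℤ) :=
  I.biUnion mirror

/-- The Chebyshev sampling matrix `C(X,I) = (T_k(x))_{x∈X,k∈I}`. -/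
noncomputable def chebMatrix {d : ℕ} (X : Finset (Fin d → ℝ)) (I : Finset (Fin d → ℕ)) :
    Matrix {x // x ∈ X} {k // k ∈ I} ℝ :=
  fun x k => chebT (k : Fin d → ℕ) (x : Fin d → ℝ)

/-- The Fourier sampling matrix `F(T,J) = (e^{2πi h·t})_{t∈T,h∈J}`. -/
noncomputable def fourierMatrix {d : ℕ} (T : Finset (Fin d → ℝ)) (J : Finset (Fin d → ℤ)) :
    Matrix {t // t ∈ T} {h // h ∈ J} ℂ :=
  fun t h => Complex.exp (2 * Real.pi * Complex.I * ∑ j, ((h : Fin d → ℤ) j : ℂ) * ((t : Fin d → ℝ) j : ℂ))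

lemma cos_nat_mul_arccos_cos (n : ℕ) (θ : ℝ) :
    Real.cos (n * Real.arccos (Real.cos θ)) = Real.cos (n * θ) := by
  have h1 : Real.cos (Real.arccos (Real.cos θ)) = Real.cos θ :=
    Real.cos_arccos (Real.neg_one_le_cos θ) (Real.cos_le_one θ)
  have h2 := Polynomial.Chebyshev.T_real_cos (Real.arccos (Real.cos θ)) (n : ℤ)
  have h3 := Polynomial.Chebyshev.T_real_cos θ (n : ℤ)
  rw [h1, h3] at h2
  push_cast at h2 ⊢
  linarith [h2]

lemma mirror_eq_pi {d : ℕ} (k : Fin d → ℕ) :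
    mirror k = Fintype.piFinset (fun j => ({(k j : ℤ), -(k j : ℤ)} : Finset ℤ)) := by
  ext h
  simp only [mirror, Finset.mem_image, Finset.mem_univ, true_and, Fintype.mem_piFinset,
    Finset.mem_insert, Finset.mem_singleton]
  constructor
  · rintro ⟨l, rfl⟩ j
    by_cases hl : l j <;> simp [hl]
  · intro hj
    refine ⟨fun j => decide (h j = (k j : ℤ)), funext fun j => ?_⟩
    rcases hj j with h1 | h1
    · simp [h1]
    · by_cases h2 : h j = (k j : ℤ)
      · simp [h2]
      · simp only [h2, decide_false, Bool.false_eq_true, if_false]; omega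

lemma natAbs_of_mem_mirror {d : ℕ} {k : Fin d → ℕ} {h : Fin d → ℤ}
    (hm : h ∈ mirror k) (j : Fin d) : (h j).natAbs = k j := by
  rw [mirror_eq_pi, Fintype.mem_piFinset] at hm
  rcases Finset.mem_insert.mp (hm j) with h1 | h1
  · simp [h1]
  · rw [Finset.mem_singleton] at h1; simp [h1]

lemma exp_pair (r θ : ℝ) :
    (r : ℂ) * Complex.exp ((θ : ℂ) * Complex.I) + (r : ℂ) * Complex.exp (((-θ : ℝ) : ℂ) * Complex.I)
      = ((2 * r * Real.cos θ : ℝ) : ℂ) := by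
  rw [Complex.exp_mul_I, Complex.exp_mul_I]
  push_cast
  simp only [Complex.cos_neg, Complex.sin_neg]
  ring

lemma key_sum {d : ℕ} (k : Fin d → ℕ) (t : Fin d → ℝ) :
    ∑ h ∈ mirror k, ((∏ j, if h j = 0 then (1 : ℂ) else ((Real.sqrt 2 / 2 : ℝ) : ℂ)) *
      Complex.exp (2 * Real.pi * Complex.I * ∑ j, (h j : ℂ) * (t j : ℂ)))
    = ((chebT k (fun j => Real.cos (2 * Real.pi * t j)) : ℝ) : ℂ) := by
  have hx : ∀ j : Fin d,
      Real.cos ((k j : ℝ) * Real.arccos (Real.cos (2 * Real.pi * t j)))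
        = Real.cos (2 * Real.pi * (k j : ℝ) * t j) := by
    intro j
    rw [cos_nat_mul_arccos_cos]
    ring_nf
  rw [mirror_eq_pi]
  have step : ∀ h ∈ Fintype.piFinset (fun j => ({(k j : ℤ), -(k j : ℤ)} : Finset ℤ)),
      ((∏ j, if h j = 0 then (1 : ℂ) else ((Real.sqrt 2 / 2 : ℝ) : ℂ)) *
        Complex.exp (2 * Real.pi * Complex.I * ∑ j, (h j : ℂ) * (t j : ℂ)))
      = ∏ j, ((if h j = 0 then (1 : ℂ) else ((Real.sqrt 2 / 2 : ℝ) : ℂ)) *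
          Complex.exp (((2 * Real.pi * (h j : ℝ) * t j : ℝ) : ℂ) * Complex.I)) := by
    intro h _
    rw [Finset.prod_mul_distrib]
    congr 1
    rw [← Complex.exp_sum]
    congr 1
    rw [Finset.mul_sum]
    refine Finset.sum_congr rfl fun j _ => ?_
    push_cast
    ring
  rw [Finset.sum_congr rfl step,
    ← Finset.prod_univ_sum (fun j => ({(k j : ℤ), -(k j : ℤ)} : Finset ℤ))
      (fun j m => (if m = 0 then (1 : ℂ) else ((Real.sqrt 2 / 2 : ℝ) : ℂ)) *
        Complex.exp (((2 * Real.pi * (m : ℝ) * t j : ℝ) : ℂ) * Complex.I))]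
  unfold chebT
  rw [Complex.ofReal_prod]
  refine Finset.prod_congr rfl fun j _ => ?_
  by_cases hk : k j = 0
  · simp [hk]
  · have hkz : (k j : ℤ) ≠ 0 := by exact_mod_cast hk
    have hne : (k j : ℤ) ≠ -(k j : ℤ) := by omega
    rw [Finset.sum_pair hne, if_neg hkz, if_neg (by omega : -(k j : ℤ) ≠ 0), if_neg hk]
    have e2 : (2 * Real.pi * ((-(k j : ℤ) : ℤ) : ℝ) * t j) = -(2 * Real.pi * ((k j : ℤ) : ℝ) * t j) := by
      push_cast; ring
    rw [e2, exp_pair (Real.sqrt 2 / 2) (2 * Real.pi * ((k j : ℤ) : ℝ) * t j), hx j]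
    push_cast
    ring_nf

noncomputable def wvec {d : ℕ} (c' : (Fin d → ℕ) → ℝ) (h : Fin d → ℤ) : ℂ :=
  ((c' (fun j => (h j).natAbs) : ℝ) : ℂ) *
    ∏ j, (if h j = 0 then (1 : ℂ) else ((Real.sqrt 2 / 2 : ℝ) : ℂ))

/-- Theorem `spatial_discr_per`: if the Fourier matrix `F(T,M(I))` has
trivial kernel, then the cosine transformed set `X = Cos(T)` is a spatial discretization
of the span of Chebyshev polynomials indexed by `I`, i.e. `C(X,I)` has full column rank. -/
theorem stmt_9 {d : ℕ} (T : Finset (Fin d → ℝ)) (X : Finset (Fin d → ℝ))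
    (I : Finset (Fin d → ℕ))
    (hX : X = @Finset.image _ _ (Classical.decEq _)
      (fun t : Fin d → ℝ => fun j => Real.cos (2 * Real.pi * t j)) T)
    (hker : LinearMap.ker (fourierMatrix T (mirrorSet I)).mulVecLin = ⊥) :
    (chebMatrix X I).rank = I.card := by
  classical
  have hdisj : (↑I : Set (Fin d → ℕ)).PairwiseDisjoint mirror := by
    intro k1 _ k2 _ hne
    simp only [Function.onFun, Finset.disjoint_left]
    intro a ha1 ha2
    exact hne (funext fun j => by
      rw [← natAbs_of_mem_mirror ha1 j, ← natAbs_of_mem_mirror ha2 j])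
  have hkerC : LinearMap.ker (chebMatrix X I).mulVecLin = ⊥ := by
    rw [LinearMap.ker_eq_bot']
    intro c hc
    have hc' : ∀ x : {x // x ∈ X},
        ∑ kk : {k // k ∈ I}, chebT (kk : Fin d → ℕ) (x : Fin d → ℝ) * c kk = 0 := by
      intro x
      have := congrFun hc x
      simpa [Matrix.mulVecLin_apply, Matrix.mulVec, dotProduct, chebMatrix] using this
    set c' : (Fin d → ℕ) → ℝ := fun kk => if hk : kk ∈ I then c ⟨kk, hk⟩ else 0 with hc'def
    set v : {h // h ∈ mirrorSet I} → ℂ := fun h => wvec c' (h : Fin d → ℤ) with hv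
    have hFv : (fourierMatrix T (mirrorSet I)).mulVecLin v = 0 := by
      funext tt
      simp only [Matrix.mulVecLin_apply, Matrix.mulVec, dotProduct, Pi.zero_apply,
        hv, fourierMatrix]
      have h1 := Finset.sum_coe_sort (mirrorSet I)
        (fun h => Complex.exp (2 * Real.pi * Complex.I *
            ∑ j, (h j : ℂ) * ((tt : Fin d → ℝ) j : ℂ)) * wvec c' h)
      rw [h1, mirrorSet, Finset.sum_biUnion hdisj]
      have h2 : ∀ kk ∈ I,
          (∑ h ∈ mirror kk,
            Complex.exp (2 * Real.pi * Complex.I * ∑ j, (h j : ℂ) * ((tt : Fin d → ℝ) j : ℂ)) *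
              wvec c' h)
          = ((c' kk : ℝ) : ℂ) *
              ((chebT kk (fun j => Real.cos (2 * Real.pi * (tt : Fin d → ℝ) j)) : ℝ) : ℂ) := by
        intro kk hkk
        rw [← key_sum kk (tt : Fin d → ℝ), Finset.mul_sum]
        refine Finset.sum_congr rfl fun h hm => ?_
        have hab : (fun j => (h j).natAbs) = (kk : Fin d → ℕ) :=
          funext fun j => natAbs_of_mem_mirror hm j
        rw [wvec, hab]
        ring
      rw [Finset.sum_congr rfl h2]
      have hxmem : (fun j => Real.cos (2 * Real.pi * (tt : Fin d → ℝ) j)) ∈ X := by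
        rw [hX]
        exact @Finset.mem_image_of_mem _ _ (Classical.decEq _) _ _ _ tt.2
      have h3 : ∑ kk ∈ I, c' kk *
          chebT kk (fun j => Real.cos (2 * Real.pi * (tt : Fin d → ℝ) j)) = 0 := by
        rw [← Finset.sum_coe_sort I (fun kk => c' kk *
          chebT kk (fun j => Real.cos (2 * Real.pi * (tt : Fin d → ℝ) j)))]
        rw [← hc' ⟨_, hxmem⟩]
        refine Finset.sum_congr rfl fun kk _ => ?_
        rw [hc'def]
        simp only [Subtype.coe_eta, dif_pos kk.2]
        ring
      push_cast [← Complex.ofReal_mul, ← Complex.ofReal_sum]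
      exact_mod_cast congrArg Complex.ofReal h3
    have hv0 : v = 0 := by
      have hmem : v ∈ LinearMap.ker (fourierMatrix T (mirrorSet I)).mulVecLin :=
        LinearMap.mem_ker.mpr hFv
      rwa [hker, Submodule.mem_bot] at hmem
    funext kk
    have hmem : (fun j => ((kk : Fin d → ℕ) j : ℤ)) ∈ mirrorSet I := by
      refine Finset.mem_biUnion.mpr ⟨kk, kk.2, ?_⟩
      rw [mirror_eq_pi, Fintype.mem_piFinset]
      intro j
      simp
    have := congrFun hv0 ⟨_, hmem⟩
    rw [hv] at this
    simp only [Pi.zero_apply, wvec, mul_eq_zero] at this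
    have hwne : (∏ j, (if ((kk : Fin d → ℕ) j : ℤ) = 0 then (1 : ℂ)
        else ((Real.sqrt 2 / 2 : ℝ) : ℂ))) ≠ 0 := by
      refine Finset.prod_ne_zero_iff.mpr fun j _ => ?_
      split
      · exact one_ne_zero
      · simp only [ne_eq, Complex.ofReal_eq_zero]
        positivity
    rcases this with h0 | h0
    · have : c' (fun j => (((kk : Fin d → ℕ) j : ℤ)).natAbs) = 0 := by exact_mod_cast h0
      have habs : (fun j => (((kk : Fin d → ℕ) j : ℤ)).natAbs) = (kk : Fin d → ℕ) :=
        funext fun j => Int.natAbs_natCast _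
      rw [habs, hc'def] at this
      simpa [dif_pos kk.2] using this
    · exact absurd h0 hwne
  have hinj : Function.Injective (chebMatrix X I).mulVecLin := LinearMap.ker_eq_bot.mp hkerC
  rw [Matrix.rank, LinearMap.finrank_range_of_inj hinj,
    Module.finrank_fintype_fun_eq_card, Fintype.card_coe]
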